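/- Let G_uu, G_uv, G_vv : ℝ² → ℝ be continuously differentiable with g := G_uu·G_vv − G_uv² > 0 everywhere, and let F¹, F² : ℝ² → ℝ be continuously differentiable with (1/√g)(∂_u(√g F¹) + ∂_v(√g F²)) = 0 and (1/√g)(∂_u(G_uv F¹ + G_vv F²) − ∂_v(G_uu F¹ + G_uv F²)) = 0 everywhere. Then the components H¹ := (−G_uv F¹ − G_vv F²)/√g, H² := (G_uu F¹ + G_uv F²)/√g also satisfy (1/√g)(∂_u(√g H¹) + ∂_v(√g H²)) = 0 and (1/√g)(∂_u(G_uv H¹ + G_vv H²) − ∂_v(G_uu H¹ + G_uv H²)) = 0. -/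

import Mathlib

/-- Partial derivative with respect to the first coordinate `u`. -/
noncomputable def pdu (f : ℝ × ℝ → ℝ) (p : ℝ × ℝ) : ℝ := fderiv ℝ f p (1, 0)

/-- Partial derivative with respect to the second coordinate `v`. -/
noncomputable def pdv (f : ℝ × ℝ → ℝ) (p : ℝ × ℝ) : ℝ := fderiv ℝ f p (0, 1)

theorem pdu_neg (f : ℝ × ℝ → ℝ) (p : ℝ × ℝ) :
    pdu (fun q => -f q) p = -pdu f p := by
  simp [pdu, fderiv_neg]

theorem pdv_neg (f : ℝ × ℝ → ℝ) (p : ℝ × ℝ) :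
    pdv (fun q => -f q) p = -pdv f p := by
  simp [pdv, fderiv_neg]

/-- If a tangential field `F` is harmonic (surface divergence-free and surface curl-free),
then so is the rotated field `n × F`. -/
theorem harmonic_closed_under_rotation
    (G_uu G_uv G_vv : ℝ × ℝ → ℝ)
    (hGuu : ContDiff ℝ 1 G_uu) (hGuv : ContDiff ℝ 1 G_uv) (hGvv : ContDiff ℝ 1 G_vv)
    (g : ℝ × ℝ → ℝ) (hgdef : ∀ p, g p = G_uu p * G_vv p - (G_uv p) ^ 2)
    (hgpos : ∀ p, 0 < g p)
    (F1 F2 : ℝ × ℝ → ℝ) (hF1 : ContDiff ℝ 1 F1) (hF2 : ContDiff ℝ 1 F2)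
    (hdiv : ∀ p : ℝ × ℝ,
      (1 / Real.sqrt (g p)) *
        (pdu (fun q => Real.sqrt (g q) * F1 q) p + pdv (fun q => Real.sqrt (g q) * F2 q) p) = 0)
    (hcurl : ∀ p : ℝ × ℝ,
      (1 / Real.sqrt (g p)) *
        (pdu (fun q => G_uv q * F1 q + G_vv q * F2 q) p -
          pdv (fun q => G_uu q * F1 q + G_uv q * F2 q) p) = 0)
    (H1 H2 : ℝ × ℝ → ℝ)
    (hH1 : ∀ p, H1 p = (-(G_uv p) * F1 p - G_vv p * F2 p) / Real.sqrt (g p))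
    (hH2 : ∀ p, H2 p = (G_uu p * F1 p + G_uv p * F2 p) / Real.sqrt (g p)) :
    (∀ p : ℝ × ℝ,
      (1 / Real.sqrt (g p)) *
        (pdu (fun q => Real.sqrt (g q) * H1 q) p + pdv (fun q => Real.sqrt (g q) * H2 q) p) = 0)
    ∧
    (∀ p : ℝ × ℝ,
      (1 / Real.sqrt (g p)) *
        (pdu (fun q => G_uv q * H1 q + G_vv q * H2 q) p -
          pdv (fun q => G_uu q * H1 q + G_uv q * H2 q) p) = 0) := by
  have hs : ∀ p, Real.sqrt (g p) ≠ 0 :=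
    fun p => ne_of_gt (Real.sqrt_pos.mpr (hgpos p))
  have hsq : ∀ p, Real.sqrt (g p) * Real.sqrt (g p) = g p :=
    fun p => Real.mul_self_sqrt (le_of_lt (hgpos p))
  have hspos : ∀ p, (0:ℝ) < 1 / Real.sqrt (g p) :=
    fun p => one_div_pos.mpr (Real.sqrt_pos.mpr (hgpos p))
  -- the four pointwise identities
  have e1 : (fun q => Real.sqrt (g q) * H1 q)
      = fun q => -(G_uv q * F1 q + G_vv q * F2 q) := by
    funext q; rw [hH1 q, mul_comm, div_mul_cancel₀ _ (hs q)]; ring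
  have e2 : (fun q => Real.sqrt (g q) * H2 q)
      = fun q => G_uu q * F1 q + G_uv q * F2 q := by
    funext q; rw [hH2 q, mul_comm, div_mul_cancel₀ _ (hs q)]
  have e3 : (fun q => G_uv q * H1 q + G_vv q * H2 q)
      = fun q => Real.sqrt (g q) * F1 q := by
    funext q; rw [hH1 q, hH2 q, ← mul_div_assoc, ← mul_div_assoc, ← add_div, div_eq_iff (hs q)]
    linear_combination (-(F1 q)) * hgdef q + (-(F1 q)) * hsq q
  have e4 : (fun q => G_uu q * H1 q + G_uv q * H2 q)
      = fun q => -(Real.sqrt (g q) * F2 q) := by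
    funext q; rw [hH1 q, hH2 q, ← mul_div_assoc, ← mul_div_assoc, ← add_div, div_eq_iff (hs q)]
    linear_combination F2 q * hgdef q + F2 q * hsq q
  constructor
  · intro p
    rw [e1, e2, pdu_neg]
    have h := hcurl p
    have h2 : pdu (fun q => G_uv q * F1 q + G_vv q * F2 q) p -
        pdv (fun q => G_uu q * F1 q + G_uv q * F2 q) p = 0 := by
      by_contra hne
      exact hne (by
        have := mul_eq_zero.mp h
        rcases this with h' | h'
        · exact absurd h' (ne_of_gt (hspos p))
        · exact h')
    have : -pdu (fun q => G_uv q * F1 q + G_vv q * F2 q) p +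
        pdv (fun q => G_uu q * F1 q + G_uv q * F2 q) p = 0 := by linarith
    rw [this, mul_zero]
  · intro p
    rw [e3, e4, pdv_neg]
    have h := hdiv p
    have h2 : pdu (fun q => Real.sqrt (g q) * F1 q) p +
        pdv (fun q => Real.sqrt (g q) * F2 q) p = 0 := by
      by_contra hne
      exact hne (by
        have := mul_eq_zero.mp h
        rcases this with h' | h'
        · exact absurd h' (ne_of_gt (hspos p))
        · exact h')
    have : pdu (fun q => Real.sqrt (g q) * F1 q) p -
        -pdv (fun q => Real.sqrt (g q) * F2 q) p = 0 := by linarith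
    rw [this, mul_zero]
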